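/- Cosine formula: Let n ≥ 2 and let f : ℝ/Lℤ → ℝⁿ be an injective closed curve of class C² parametrized by arclength (‖f'(s)‖ = 1 for all s), with unit tangent τ = f'. For s₁ ≠ s₂ define the cosine of the conformal angle by cos φ(s₁,s₂) = 2(Δf·τ(s₁))(Δf·τ(s₂))/‖Δf‖² − τ(s₁)·τ(s₂), where Δf = f(s₁) − f(s₂). Then ∬_{(ℝ/Lℤ)²} (1 − cos φ(s₁,s₂))/‖f(s₁) − f(s₂)‖² ds₁ ds₂ = E(f) − 4. -/

import Mathlib

open MeasureTheory Real intervalIntegral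
open scoped RealInnerProductSpace
set_option maxHeartbeats 1000000
noncomputable section
namespace CF


/-! ### The intrinsic distance function -/

variable {L : ℝ}

def D (L x : ℝ) : ℝ := ⨅ k : ℤ, |x + (k : ℝ) * L|

lemma D_bdd (L x : ℝ) : BddBelow (Set.range fun k : ℤ => |x + (k : ℝ) * L|) :=
  ⟨0, by rintro y ⟨k, rfl⟩; positivity⟩

lemma D_nonneg (L x : ℝ) : 0 ≤ D L x :=
  le_ciInf fun k => abs_nonneg _

lemma D_le (L x : ℝ) (k : ℤ) : D L x ≤ |x + (k : ℝ) * L| :=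
  ciInf_le (D_bdd L x) k

lemma D_add (L x : ℝ) : D L (x + L) = D L x := by
  have h : (Set.range fun k : ℤ => |x + L + (k : ℝ) * L|)
      = Set.range fun k : ℤ => |x + (k : ℝ) * L| := by
    ext y
    constructor
    · rintro ⟨k, rfl⟩; exact ⟨k + 1, by push_cast; ring_nf⟩
    · rintro ⟨k, rfl⟩; exact ⟨k - 1, by push_cast; ring_nf⟩
  simp only [D, iInf, h]

lemma D_sub (L x : ℝ) : D L (x - L) = D L x := by
  have := D_add L (x - L); simpa using this.symm

lemma D_eval (hL : 0 < L) {u : ℝ} (hu : u ∈ Set.Icc 0 L) :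
    D L (-u) = min u (L - u) := by
  obtain ⟨hu0, huL⟩ := hu
  apply le_antisymm
  · apply le_min
    · have := D_le L (-u) 0
      simp only [Int.cast_zero, zero_mul, add_zero, abs_neg, abs_of_nonneg hu0] at this
      exact this
    · have := D_le L (-u) 1
      rw [abs_of_nonneg (by push_cast; linarith)] at this
      push_cast at this; linarith
  · apply le_ciInf
    intro k
    rcases le_or_gt k 0 with hk | hk
    · have hkL : (k : ℝ) * L ≤ 0 :=
        mul_nonpos_of_nonpos_of_nonneg (by exact_mod_cast hk) hL.le
      have : |-u + (k : ℝ) * L| = u - (k:ℝ)*L := by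
        rw [abs_of_nonpos (by linarith)]; ring
      rw [this]
      exact le_trans (min_le_left _ _) (by linarith)
    · have hk1 : (1 : ℝ) ≤ (k : ℝ) := by exact_mod_cast hk
      have hkL : L ≤ (k : ℝ) * L := le_mul_of_one_le_left hL.le hk1
      have : |-u + (k : ℝ) * L| = (k:ℝ)*L - u := by
        rw [abs_of_nonneg (by linarith)]; ring
      rw [this]
      exact le_trans (min_le_right _ _) (by linarith)

lemma D_lipschitz (L : ℝ) : LipschitzWith 1 (D L) := by
  apply LipschitzWith.of_dist_le_mul
  intro x y
  rw [NNReal.coe_one, one_mul, Real.dist_eq, Real.dist_eq]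
  rw [abs_sub_le_iff]
  constructor
  · rw [sub_le_iff_le_add]
    apply le_of_forall_pos_le_add
    intro δ hδ
    obtain ⟨k, hk⟩ := exists_lt_of_ciInf_lt (show D L y < D L y + δ by linarith)
    calc D L x ≤ |x + (k:ℝ)*L| := D_le L x k
      _ ≤ |y + (k:ℝ)*L| + |x - y| := by
          have := abs_sub_abs_le_abs_sub (x + (k:ℝ)*L) (y + (k:ℝ)*L)
          have h2 : x + (k:ℝ)*L - (y + (k:ℝ)*L) = x - y := by ring
          rw [h2] at this; linarith [abs_nonneg (x-y)]
      _ ≤ |x - y| + D L y + δ := by linarith [hk.le]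
  · rw [sub_le_iff_le_add]
    apply le_of_forall_pos_le_add
    intro δ hδ
    obtain ⟨k, hk⟩ := exists_lt_of_ciInf_lt (show D L x < D L x + δ by linarith)
    calc D L y ≤ |y + (k:ℝ)*L| := D_le L y k
      _ ≤ |x + (k:ℝ)*L| + |x - y| := by
          have := abs_sub_abs_le_abs_sub (y + (k:ℝ)*L) (x + (k:ℝ)*L)
          have h2 : y + (k:ℝ)*L - (x + (k:ℝ)*L) = -(x - y) := by ring
          rw [h2, abs_neg] at this; linarith [abs_nonneg (x-y)]
      _ ≤ |x - y| + D L x + δ := by linarith [hk.le]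

lemma D_continuous (L : ℝ) : Continuous (D L) := (D_lipschitz L).continuous

lemma D_zero (hL : 0 < L) : D L 0 = 0 := by
  have h := D_eval hL (u := 0) ⟨le_refl 0, hL.le⟩
  simp only [neg_zero, sub_zero] at h
  rw [h, min_eq_left hL.le]

lemma D_negL (hL : 0 < L) : D L (-L) = 0 := by
  have := D_sub L 0
  simp only [zero_sub] at this
  rw [this, D_zero hL]

lemma D_L (hL : 0 < L) : D L L = 0 := by
  have := D_add L 0
  simp only [zero_add] at this
  rw [this, D_zero hL]



variable {n : ℕ} {f : ℝ → EuclideanSpace ℝ (Fin n)} {M : ℝ}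

-- scalar FTC for inner products with a fixed vector
lemma inner_ftc (hdf : Differentiable ℝ f) (hdc : Continuous (deriv f))
    (s u : ℝ) (v : EuclideanSpace ℝ (Fin n)) :
    ⟪f (s + u) - f s, v⟫ = ∫ t in (0:ℝ)..u, ⟪deriv f (s + t), v⟫ := by
  have h : ∀ t : ℝ, HasDerivAt (fun t => ⟪f (s + t) - f s, v⟫) ⟪deriv f (s + t), v⟫ t := by
    intro t
    have h1 : HasDerivAt (fun t : ℝ => f (s + t)) (deriv f (s + t)) t := by
      have := ((hdf (s + t)).hasDerivAt).scomp t ((hasDerivAt_id t).const_add s)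
      simp at this; exact this
    have h2 : HasDerivAt (fun t : ℝ => f (s + t) - f s) (deriv f (s + t)) t := by
      simpa using h1.sub_const (f s)
    have h3 := (h2.inner ℝ (hasDerivAt_const t v))
    simpa using h3
  have hcont : Continuous fun t : ℝ => ⟪deriv f (s + t), v⟫ := by
    exact (hdc.comp (continuous_const.add continuous_id)).inner continuous_const
  have := intervalIntegral.integral_eq_sub_of_hasDerivAt
    (f := fun t => ⟪f (s + t) - f s, v⟫) (fun t _ => h t)
    (hcont.intervalIntegrable 0 u)
  rw [this]; simp

lemma unit_inner (a b : EuclideanSpace ℝ (Fin n)) (ha : ‖a‖ = 1) (hb : ‖b‖ = 1) :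
    1 - ⟪a, b⟫ = ‖a - b‖ ^ 2 / 2 := by
  have h := norm_sub_sq_real a b
  rw [ha, hb] at h
  linarith

lemma est_main (hdf : Differentiable ℝ f) (hdc : Continuous (deriv f))
    (hτ : ∀ s, ‖deriv f s‖ = 1) (hM0 : 0 ≤ M)
    (hlip : ∀ x y, ‖deriv f x - deriv f y‖ ≤ M * |x - y|)
    (s u : ℝ) (hu : 0 ≤ u) (v : EuclideanSpace ℝ (Fin n)) (hv : ‖v‖ = 1)
    (hvc : ∀ t ∈ Set.Ioc 0 u, ‖deriv f (s + t) - v‖ ≤ M * u) :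
    |⟪f s - f (s + u), v⟫ + u| ≤ M ^ 2 * u ^ 3 / 2 := by
  have h1 : ⟪f s - f (s + u), v⟫ + u = ∫ t in (0:ℝ)..u, (1 - ⟪deriv f (s + t), v⟫) := by
    have h2 := inner_ftc hdf hdc s u v
    have h3 : ⟪f s - f (s+u), v⟫ = - ⟪f (s+u) - f s, v⟫ := by
      rw [← inner_neg_left]; congr 1; abel
    have hcont : Continuous fun t : ℝ => ⟪deriv f (s + t), v⟫ :=
      (hdc.comp (continuous_const.add continuous_id)).inner continuous_const
    have hone : (∫ t in (0:ℝ)..u, (1:ℝ)) = u := by simp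
    rw [intervalIntegral.integral_sub (intervalIntegrable_const)
        (hcont.intervalIntegrable 0 u), ← h2, h3, hone]
    ring
  rw [h1]
  have hb : ∀ t ∈ Set.uIoc (0:ℝ) u, ‖1 - ⟪deriv f (s + t), v⟫‖ ≤ (M*u)^2/2 := by
    intro t ht
    rw [Set.uIoc_of_le hu] at ht
    have h4 := unit_inner (deriv f (s+t)) v (hτ _) hv
    rw [Real.norm_eq_abs, h4, abs_div, abs_of_nonneg (sq_nonneg _)]
    have h5 := hvc t ht
    have h6 : ‖deriv f (s+t) - v‖^2 ≤ (M*u)^2 := by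
      apply sq_le_sq' _ h5
      nlinarith [norm_nonneg (deriv f (s+t) - v)]
    simp only [abs_two]
    linarith
  have := intervalIntegral.norm_integral_le_of_norm_le_const hb
  rw [Real.norm_eq_abs] at this
  calc |∫ t in (0:ℝ)..u, (1 - ⟪deriv f (s + t), v⟫)| ≤ (M*u)^2/2 * |u - 0| := this
    _ = M^2 * u^3 / 2 := by rw [abs_of_nonneg (by linarith)]; ring

lemma est1 (hdf : Differentiable ℝ f) (hdc : Continuous (deriv f))
    (hτ : ∀ s, ‖deriv f s‖ = 1) (hM0 : 0 ≤ M)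
    (hlip : ∀ x y, ‖deriv f x - deriv f y‖ ≤ M * |x - y|)
    (s u : ℝ) (hu : 0 ≤ u) :
    |⟪f s - f (s + u), deriv f s⟫ + u| ≤ M ^ 2 * u ^ 3 / 2 := by
  apply est_main hdf hdc hτ hM0 hlip s u hu _ (hτ s)
  intro t ht
  have := hlip (s + t) s
  have h2 : |s + t - s| = t := by rw [add_sub_cancel_left, abs_of_nonneg ht.1.le]
  rw [h2] at this
  calc ‖deriv f (s+t) - deriv f s‖ ≤ M * t := this
    _ ≤ M * u := by apply mul_le_mul_of_nonneg_left ht.2 hM0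

lemma est2 (hdf : Differentiable ℝ f) (hdc : Continuous (deriv f))
    (hτ : ∀ s, ‖deriv f s‖ = 1) (hM0 : 0 ≤ M)
    (hlip : ∀ x y, ‖deriv f x - deriv f y‖ ≤ M * |x - y|)
    (s u : ℝ) (hu : 0 ≤ u) :
    |⟪f s - f (s + u), deriv f (s + u)⟫ + u| ≤ M ^ 2 * u ^ 3 / 2 := by
  apply est_main hdf hdc hτ hM0 hlip s u hu _ (hτ (s+u))
  intro t ht
  have := hlip (s + t) (s + u)
  have h2 : |s + t - (s + u)| = u - t := by
    rw [show s + t - (s+u) = -(u - t) by ring, abs_neg, abs_of_nonneg (by linarith [ht.2])]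
  rw [h2] at this
  calc ‖deriv f (s+t) - deriv f (s+u)‖ ≤ M * (u-t) := this
    _ ≤ M * u := by apply mul_le_mul_of_nonneg_left (by linarith [ht.1]) hM0

lemma tau_est (hτ : ∀ s, ‖deriv f s‖ = 1) (hM0 : 0 ≤ M)
    (hlip : ∀ x y, ‖deriv f x - deriv f y‖ ≤ M * |x - y|)
    (s u : ℝ) (hu : 0 ≤ u) :
    |⟪deriv f s, deriv f (s + u)⟫ - 1| ≤ M ^ 2 * u ^ 2 / 2 := by
  have h4 := unit_inner (deriv f s) (deriv f (s+u)) (hτ _) (hτ _)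
  have h5 := hlip s (s+u)
  have h6 : |s - (s+u)| = u := by
    rw [show s - (s+u) = -u by ring, abs_neg, abs_of_nonneg hu]
  rw [h6] at h5
  have h7 : ‖deriv f s - deriv f (s+u)‖^2 ≤ (M*u)^2 := by
    apply sq_le_sq' _ h5
    nlinarith [norm_nonneg (deriv f s - deriv f (s+u))]
  rw [abs_sub_comm, show (1:ℝ) - ⟪deriv f s, deriv f (s+u)⟫ = ‖deriv f s - deriv f (s+u)‖^2/2 from h4]
  rw [abs_of_nonneg (by positivity)]
  nlinarith

lemma norm_le_u (hdf : Differentiable ℝ f) (hdc : Continuous (deriv f))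
    (hτ : ∀ s, ‖deriv f s‖ = 1) (s u : ℝ) (hu : 0 ≤ u) :
    ‖f (s + u) - f s‖ ≤ u := by
  have h : ∀ t : ℝ, HasDerivAt (fun t : ℝ => f (s + t)) (deriv f (s + t)) t := by
    intro t
    have := ((hdf (s + t)).hasDerivAt).scomp t ((hasDerivAt_id t).const_add s)
    simp at this; exact this
  have hcont : Continuous fun t : ℝ => deriv f (s + t) :=
    hdc.comp (continuous_const.add continuous_id)
  have hftc := intervalIntegral.integral_eq_sub_of_hasDerivAt
    (f := fun t : ℝ => f (s + t)) (a := 0) (b := u) (fun t _ => h t)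
    (hcont.intervalIntegrable 0 u)
  have hb : ∀ t ∈ Set.uIoc (0:ℝ) u, ‖deriv f (s + t)‖ ≤ 1 := fun t _ => (hτ _).le
  have := intervalIntegral.norm_integral_le_of_norm_le_const hb
  rw [hftc] at this
  simpa [abs_of_nonneg hu] using this

lemma norm_ge_u (hdf : Differentiable ℝ f) (hdc : Continuous (deriv f))
    (hτ : ∀ s, ‖deriv f s‖ = 1) (hM0 : 0 ≤ M)
    (hlip : ∀ x y, ‖deriv f x - deriv f y‖ ≤ M * |x - y|)
    (s u : ℝ) (hu : 0 ≤ u) :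
    u - M ^ 2 * u ^ 3 / 2 ≤ ‖f (s + u) - f s‖ := by
  have h1 := est1 hdf hdc hτ hM0 hlip s u hu
  have h2 : ⟪f (s+u) - f s, deriv f s⟫ ≥ u - M^2*u^3/2 := by
    have h3 : ⟪f (s+u) - f s, deriv f s⟫ = -(⟪f s - f (s+u), deriv f s⟫) := by
      rw [← inner_neg_left]; congr 1; abel
    rw [h3]
    have := abs_le.mp h1
    linarith [this.2]
  have h4 := real_inner_le_norm (f (s+u) - f s) (deriv f s)
  rw [hτ s, mul_one] at h4
  linarith



lemma alg_bounds (M u R N₁ N₂ T : ℝ) (hM0 : 0 ≤ M) (hu : 0 < u) (hMu : M * u ≤ 1)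
    (hR1 : u^2/4 ≤ R) (hR2 : R ≤ u^2) (hR3 : |R - u^2| ≤ M^2*u^4)
    (hN₁ : |N₁ + u| ≤ M^2*u^3/2) (hN₂ : |N₂ + u| ≤ M^2*u^3/2)
    (hT : |T - 1| ≤ M^2*u^2/2) :
    |1/R - 1/u^2| ≤ 4*M^2 ∧ |(1 - (2*N₁*N₂/R - T))/R| ≤ 100*M^2 ∧
    |N₁/R + 1/u| ≤ 6*M^2*u ∧ |N₂/R + 1/u| ≤ 6*M^2*u := by
  have hR0 : 0 < R := lt_of_lt_of_le (by positivity) hR1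
  have hu2 : (0:ℝ) < u^2 := by positivity
  have hMu0 : 0 ≤ M * u := mul_nonneg hM0 hu.le
  have hMu2 : M^2*u^2 ≤ 1 := by nlinarith [mul_le_mul hMu hMu hMu0 zero_le_one]
  obtain ⟨hTa, hTb⟩ := abs_le.mp hT
  have hN12 : |N₁*N₂ - u^2| ≤ (5/4)*M^2*u^4 := by
    have hid : N₁*N₂ - u^2 = (N₁+u)*(N₂+u) - u*(N₁+u) - u*(N₂+u) := by ring
    rw [hid]
    calc |(N₁+u)*(N₂+u) - u*(N₁+u) - u*(N₂+u)|
        ≤ |(N₁+u)*(N₂+u) - u*(N₁+u)| + |u*(N₂+u)| := abs_sub _ _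
      _ ≤ |(N₁+u)*(N₂+u)| + |u*(N₁+u)| + |u*(N₂+u)| := by
          have := abs_sub ((N₁+u)*(N₂+u)) (u*(N₁+u)); linarith
      _ ≤ (M^2*u^3/2)*(M^2*u^3/2) + u*(M^2*u^3/2) + u*(M^2*u^3/2) := by
          rw [abs_mul, abs_mul, abs_mul, abs_of_pos hu]
          have h1 := abs_nonneg (N₁+u); have h2 := abs_nonneg (N₂+u)
          gcongr <;> first | exact hN₁ | exact hN₂
      _ ≤ (5/4)*M^2*u^4 := by
          have hM4 : M^4*u^6 ≤ M^2*u^4 := by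
            have := mul_le_mul_of_nonneg_right hMu2 (show (0:ℝ) ≤ M^2*u^4 by positivity)
            nlinarith
          nlinarith
  refine ⟨?_, ?_, ?_, ?_⟩
  · have heq : 1/R - 1/u^2 = (u^2 - R)/(R*u^2) := by field_simp
    rw [heq, abs_div, abs_of_pos (show (0:ℝ) < R*u^2 by positivity)]
    calc |u^2 - R| / (R*u^2) ≤ (M^2*u^4) / (u^2/4*u^2) := by
          apply div_le_div₀ (by positivity) _ (by positivity)
            (mul_le_mul_of_nonneg_right hR1 hu2.le)
          rw [abs_sub_comm]; exact hR3
      _ = 4*M^2 := by rw [div_eq_iff (by positivity)]; ring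
  · have heq : (1 - (2*N₁*N₂/R - T))/R = (R - 2*N₁*N₂ + T*R)/R^2 := by
      field_simp; ring
    rw [heq, abs_div, abs_of_pos (show (0:ℝ) < R^2 by positivity)]
    have hnum : |R - 2*N₁*N₂ + T*R| ≤ 6*M^2*u^4 := by
      have hid2 : R - 2*N₁*N₂ + T*R = (1+T)*(R - u^2) + u^2*(T-1) - 2*(N₁*N₂ - u^2) := by
        ring
      rw [hid2]
      have h1T : |1+T| ≤ 5/2 := abs_le.mpr ⟨by linarith, by linarith⟩
      calc |(1+T)*(R - u^2) + u^2*(T-1) - 2*(N₁*N₂ - u^2)|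
          ≤ |(1+T)*(R - u^2) + u^2*(T-1)| + |2*(N₁*N₂ - u^2)| := abs_sub _ _
        _ ≤ |(1+T)*(R - u^2)| + |u^2*(T-1)| + |2*(N₁*N₂ - u^2)| := by
            have := abs_add_le ((1+T)*(R - u^2)) (u^2*(T-1)); linarith
        _ ≤ (5/2)*(M^2*u^4) + u^2*(M^2*u^2/2) + 2*((5/4)*M^2*u^4) := by
            rw [abs_mul, abs_mul, abs_mul, abs_of_pos hu2, abs_two]
            have h2 := abs_nonneg (R - u^2); have h3 := abs_nonneg (T-1)
            gcongr
        _ ≤ 6*M^2*u^4 := by nlinarith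
    calc |R - 2*N₁*N₂ + T*R| / R^2 ≤ (6*M^2*u^4) / ((u^2/4)^2) := by
          apply div_le_div₀ (by positivity) hnum (by positivity)
            (pow_le_pow_left₀ (by positivity) hR1 2)
      _ = 96*M^2 := by rw [div_eq_iff (by positivity)]; ring
      _ ≤ 100*M^2 := by nlinarith
  · have heq : N₁/R + 1/u = (u*N₁ + R)/(u*R) := by field_simp
    rw [heq, abs_div, abs_of_pos (show (0:ℝ) < u*R by positivity)]
    have hnum : |u*N₁ + R| ≤ (3/2)*M^2*u^4 := by
      have hid3 : u*N₁ + R = u*(N₁ + u) + (R - u^2) := by ring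
      rw [hid3]
      calc |u*(N₁+u) + (R - u^2)| ≤ |u*(N₁+u)| + |R - u^2| := abs_add_le _ _
        _ ≤ u*(M^2*u^3/2) + M^2*u^4 := by
            rw [abs_mul, abs_of_pos hu]
            have := abs_nonneg (N₁ + u)
            gcongr
        _ = (3/2)*M^2*u^4 := by ring
    calc |u*N₁ + R| / (u*R) ≤ ((3/2)*M^2*u^4) / (u*(u^2/4)) := by
          apply div_le_div₀ (by positivity) hnum (by positivity)
            (mul_le_mul_of_nonneg_left hR1 hu.le)
      _ = 6*M^2*u := by rw [div_eq_iff (by positivity)]; ring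
  · have heq : N₂/R + 1/u = (u*N₂ + R)/(u*R) := by field_simp
    rw [heq, abs_div, abs_of_pos (show (0:ℝ) < u*R by positivity)]
    have hnum : |u*N₂ + R| ≤ (3/2)*M^2*u^4 := by
      have hid3 : u*N₂ + R = u*(N₂ + u) + (R - u^2) := by ring
      rw [hid3]
      calc |u*(N₂+u) + (R - u^2)| ≤ |u*(N₂+u)| + |R - u^2| := abs_add_le _ _
        _ ≤ u*(M^2*u^3/2) + M^2*u^4 := by
            rw [abs_mul, abs_of_pos hu]
            have := abs_nonneg (N₂ + u)
            gcongr
        _ = (3/2)*M^2*u^4 := by ring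
    calc |u*N₂ + R| / (u*R) ≤ ((3/2)*M^2*u^4) / (u*(u^2/4)) := by
          apply div_le_div₀ (by positivity) hnum (by positivity)
            (mul_le_mul_of_nonneg_left hR1 hu.le)
      _ = 6*M^2*u := by rw [div_eq_iff (by positivity)]; ring


variable {n : ℕ} {f : ℝ → EuclideanSpace ℝ (Fin n)} {M : ℝ}

lemma curve_bounds (hdf : Differentiable ℝ f) (hdc : Continuous (deriv f))
    (hτ : ∀ s, ‖deriv f s‖ = 1) (hM0 : 0 ≤ M)
    (hlip : ∀ x y, ‖deriv f x - deriv f y‖ ≤ M * |x - y|)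
    (s u : ℝ) (hu : 0 < u) (hMu : M * u ≤ 1) :
    |1/‖f s - f (s+u)‖^2 - 1/u^2| ≤ 4*M^2 ∧
    |(1 - (2*⟪f s - f (s+u), deriv f s⟫*⟪f s - f (s+u), deriv f (s+u)⟫/‖f s - f (s+u)‖^2
        - ⟪deriv f s, deriv f (s+u)⟫))/‖f s - f (s+u)‖^2| ≤ 100*M^2 ∧
    |⟪f s - f (s+u), deriv f s⟫/‖f s - f (s+u)‖^2 + 1/u| ≤ 6*M^2*u ∧
    |⟪f s - f (s+u), deriv f (s+u)⟫/‖f s - f (s+u)‖^2 + 1/u| ≤ 6*M^2*u := by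
  have hnorm : ‖f s - f (s+u)‖ = ‖f (s+u) - f s‖ := norm_sub_rev _ _
  have hle := norm_le_u hdf hdc hτ s u hu.le
  have hge := norm_ge_u hdf hdc hτ hM0 hlip s u hu.le
  have hMu0 : 0 ≤ M * u := mul_nonneg hM0 hu.le
  have hMu2 : M^2*u^2 ≤ 1 := by nlinarith [mul_le_mul hMu hMu hMu0 zero_le_one]
  have hge2 : u/2 ≤ ‖f (s+u) - f s‖ := by nlinarith
  have h0 : (0:ℝ) ≤ ‖f (s+u) - f s‖ := norm_nonneg _
  have hR1 : u^2/4 ≤ ‖f s - f (s+u)‖^2 := by rw [hnorm]; nlinarith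
  have hR2 : ‖f s - f (s+u)‖^2 ≤ u^2 := by rw [hnorm]; nlinarith
  have hR3 : |‖f s - f (s+u)‖^2 - u^2| ≤ M^2*u^4 := by
    rw [hnorm, abs_le]
    constructor
    · nlinarith
    · nlinarith
  exact alg_bounds M u _ _ _ _ hM0 hu hMu hR1 hR2 hR3
    (est1 hdf hdc hτ hM0 hlip s u hu.le) (est2 hdf hdc hτ hM0 hlip s u hu.le)
    (tau_est hτ hM0 hlip s u hu.le)



variable {n : ℕ} {L M : ℝ} {f : ℝ → EuclideanSpace ℝ (Fin n)}

def Rf (f : ℝ → EuclideanSpace ℝ (Fin n)) (s u : ℝ) : ℝ := ‖f s - f (s+u)‖^2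
def N1f (f : ℝ → EuclideanSpace ℝ (Fin n)) (s u : ℝ) : ℝ := ⟪f s - f (s+u), deriv f s⟫
def N2f (f : ℝ → EuclideanSpace ℝ (Fin n)) (s u : ℝ) : ℝ := ⟪f s - f (s+u), deriv f (s+u)⟫
def Tf (f : ℝ → EuclideanSpace ℝ (Fin n)) (s u : ℝ) : ℝ := ⟪deriv f s, deriv f (s+u)⟫
def Kf (f : ℝ → EuclideanSpace ℝ (Fin n)) (s u : ℝ) : ℝ :=
  2*N1f f s u*N2f f s u/Rf f s u - Tf f s u
def Gf (f : ℝ → EuclideanSpace ℝ (Fin n)) (s u : ℝ) : ℝ := N1f f s u / Rf f s u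
def gf (L : ℝ) (f : ℝ → EuclideanSpace ℝ (Fin n)) (s u : ℝ) : ℝ :=
  1/(min u (L-u))^2 - Kf f s u/Rf f s u

lemma hasDerivAt_curve (hdf : Differentiable ℝ f) (s u : ℝ) :
    HasDerivAt (fun v : ℝ => f (s + v)) (deriv f (s + u)) u := by
  have := ((hdf (s + u)).hasDerivAt).scomp u ((hasDerivAt_id u).const_add s)
  simp at this; exact this

lemma hasDerivAt_G (hdf : Differentiable ℝ f) (s u : ℝ) (hne : f (s+u) ≠ f s) :
    HasDerivAt (fun v => Gf f s v) (Kf f s u / Rf f s u) u := by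
  have hp : HasDerivAt (fun v : ℝ => f s - f (s + v)) (-(deriv f (s+u))) u :=
    (hasDerivAt_curve hdf s u).const_sub (f s)
  have hN : HasDerivAt (fun v => N1f f s v) (-(Tf f s u)) u := by
    have := (hp.inner ℝ (hasDerivAt_const (𝕜 := ℝ) u (deriv f s)))
    simp only [inner_zero_right, inner_zero_left, add_zero, zero_add, inner_neg_left] at this
    refine this.congr_deriv (Eq.symm ?_)
    rw [Tf, real_inner_comm]
  have hR : HasDerivAt (fun v => Rf f s v) (-(2 * N2f f s u)) u := by
    have h1 := (hp.inner ℝ hp)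
    have h2 : (fun v => ⟪f s - f (s+v), f s - f (s+v)⟫) = fun v => Rf f s v := by
      funext v; rw [real_inner_self_eq_norm_sq, Rf]
    rw [h2] at h1
    refine h1.congr_deriv (Eq.symm ?_)
    rw [N2f, inner_neg_left, inner_neg_right, real_inner_comm]
    ring
  have hR0 : Rf f s u ≠ 0 := by
    rw [Rf]
    have h : f s - f (s+u) ≠ 0 := sub_ne_zero.mpr (Ne.symm hne)
    exact pow_ne_zero 2 (norm_ne_zero_iff.mpr h)
  have := hN.div hR hR0
  refine this.congr_deriv (Eq.symm ?_)
  rw [Kf]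
  field_simp
  ring

lemma r_pos (hL : 0 < L) (hinj : ∀ s₁ s₂ : ℝ, f s₁ = f s₂ → ∃ k : ℤ, s₁ - s₂ = k * L)
    (s u : ℝ) (hu : 0 < u) (huL : u < L) : f (s+u) ≠ f s := by
  intro heq
  obtain ⟨k, hk⟩ := hinj (s+u) s heq
  rw [add_sub_cancel_left] at hk
  rcases le_or_gt k 0 with h | h
  · have : (k:ℝ) * L ≤ 0 := mul_nonpos_of_nonpos_of_nonneg (by exact_mod_cast h) hL.le
    linarith [hk ▸ hu]
  · have h1 : (1:ℝ) ≤ (k:ℝ) := by exact_mod_cast h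
    have : L ≤ (k:ℝ)*L := le_mul_of_one_le_left hL.le h1
    linarith [hk ▸ huL]

-- Reflection identities
lemma reflect (hper : ∀ s : ℝ, f (s + L) = f s) (hperτ : ∀ s : ℝ, deriv f (s + L) = deriv f s)
    (s u : ℝ) :
    Rf f s u = Rf f (s+u-L) (L-u) ∧ N1f f s u = -(N2f f (s+u-L) (L-u)) ∧
    N2f f s u = -(N1f f (s+u-L) (L-u)) ∧ Tf f s u = Tf f (s+u-L) (L-u) ∧
    Kf f s u = Kf f (s+u-L) (L-u) := by
  set s' := s+u-L with hs'
  have h1 : s' + (L-u) = s := by rw [hs']; ring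
  have h2 : f s' = f (s+u) := by
    have := hper s'
    rw [hs'] at this ⊢
    convert this.symm using 2
    ring
  have h3 : deriv f s' = deriv f (s+u) := by
    have := hperτ s'
    rw [hs'] at this ⊢
    convert this.symm using 2
    ring
  have hvec : f s' - f (s' + (L-u)) = -(f s - f (s+u)) := by
    rw [h1, h2]; abel
  have hRr : Rf f s' (L-u) = Rf f s u := by
    rw [Rf, Rf, hvec, norm_neg]
  have hN1r : N1f f s' (L-u) = -(N2f f s u) := by
    rw [N1f, N2f, hvec, h3, inner_neg_left]
  have hN2r : N2f f s' (L-u) = -(N1f f s u) := by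
    rw [N2f, N1f, hvec, h1, inner_neg_left]
  have hTr : Tf f s' (L-u) = Tf f s u := by
    rw [Tf, Tf, h1, h3, real_inner_comm]
  refine ⟨hRr.symm, ?_, ?_, hTr.symm, ?_⟩
  · rw [hN2r]; ring
  · rw [hN1r]; ring
  · rw [Kf, Kf, hRr, hN1r, hN2r, hTr]; ring


variable {c ε₀ : ℝ}

lemma curve_bounds' (hdf : Differentiable ℝ f) (hdc : Continuous (deriv f))
    (hτ : ∀ s, ‖deriv f s‖ = 1) (hM0 : 0 ≤ M)
    (hlip : ∀ x y, ‖deriv f x - deriv f y‖ ≤ M * |x - y|)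
    (s u : ℝ) (hu : 0 < u) (hMu : M * u ≤ 1) :
    |1/Rf f s u - 1/u^2| ≤ 4*M^2 ∧
    |(1 - Kf f s u)/Rf f s u| ≤ 100*M^2 ∧
    |N1f f s u/Rf f s u + 1/u| ≤ 6*M^2*u ∧
    |N2f f s u/Rf f s u + 1/u| ≤ 6*M^2*u := by
  have h := curve_bounds hdf hdc hτ hM0 hlip s u hu hMu
  simpa only [Rf, Kf, N1f, N2f, Tf] using h

/-- the global bound constant -/
def Cb (M ε₀ c : ℝ) : ℝ := 104*M^2 + 2/ε₀^2 + 5/c^2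

lemma Cb_nonneg (hε₀ : 0 < ε₀) (hc : 0 < c) : 0 ≤ Cb M ε₀ c := by
  rw [Cb]; positivity

lemma inner_abs_le (hτ : ∀ s, ‖deriv f s‖ = 1) (s u : ℝ) :
    |N1f f s u| ≤ ‖f s - f (s+u)‖ ∧ |N2f f s u| ≤ ‖f s - f (s+u)‖ ∧ |Tf f s u| ≤ 1 := by
  refine ⟨?_, ?_, ?_⟩
  · have := abs_real_inner_le_norm (f s - f (s+u)) (deriv f s)
    rwa [hτ, mul_one] at this
  · have := abs_real_inner_le_norm (f s - f (s+u)) (deriv f (s+u))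
    rwa [hτ, mul_one] at this
  · have := abs_real_inner_le_norm (deriv f s) (deriv f (s+u))
    rwa [hτ, hτ, one_mul] at this

lemma g_bound (hL : 0 < L) (hdf : Differentiable ℝ f) (hdc : Continuous (deriv f))
    (hτ : ∀ s, ‖deriv f s‖ = 1) (hM0 : 0 ≤ M)
    (hlip : ∀ x y, ‖deriv f x - deriv f y‖ ≤ M * |x - y|)
    (hper : ∀ s : ℝ, f (s + L) = f s) (hperτ : ∀ s : ℝ, deriv f (s + L) = deriv f s)
    (hε₀ : 0 < ε₀) (hε₀L : ε₀ ≤ L/4) (hε₀M : M*ε₀ ≤ 1)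
    (hc : 0 < c) (hcmin : ∀ s ∈ Set.Icc 0 L, ∀ u ∈ Set.Icc ε₀ (L-ε₀), c ≤ ‖f (s+u) - f s‖)
    (s : ℝ) (hs : s ∈ Set.Icc 0 L) (u : ℝ) (hu : u ∈ Set.Ioc 0 L) :
    |1/Rf f s u - 1/(min u (L-u))^2| ≤ Cb M ε₀ c ∧
    |(1 - Kf f s u)/Rf f s u| ≤ Cb M ε₀ c := by
  obtain ⟨hu0, huL⟩ := hu
  have hCbranch : ∀ v : ℝ, 0 < v → v ≤ ε₀ → ∀ s' : ℝ,
      |1/Rf f s' v - 1/v^2| ≤ Cb M ε₀ c ∧ |(1 - Kf f s' v)/Rf f s' v| ≤ Cb M ε₀ c := by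
    intro v hv hvε s'
    have hMv : M*v ≤ 1 := le_trans (mul_le_mul_of_nonneg_left hvε hM0) hε₀M
    obtain ⟨h1, h2, -, -⟩ := curve_bounds' hdf hdc hτ hM0 hlip s' v hv hMv
    have p1 : (0:ℝ) ≤ 100*M^2 + 2/ε₀^2 + 5/c^2 := by positivity
    have p2 : (0:ℝ) ≤ 4*M^2 + 2/ε₀^2 + 5/c^2 := by positivity
    constructor
    · calc |1/Rf f s' v - 1/v^2| ≤ 4*M^2 := h1
        _ ≤ Cb M ε₀ c := by rw [Cb]; linarith
    · calc |(1 - Kf f s' v)/Rf f s' v| ≤ 100*M^2 := h2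
        _ ≤ Cb M ε₀ c := by rw [Cb]; linarith
  rcases le_or_gt u ε₀ with hcase1 | h1
  · have hmin : min u (L-u) = u := min_eq_left (by linarith)
    rw [hmin]
    exact hCbranch u hu0 hcase1 s
  rcases eq_or_lt_of_le huL with hcase3 | huL'
  · -- u = L
    subst hcase3
    have hR0 : Rf f s u = 0 := by
      rw [Rf, hper s, sub_self, norm_zero]
      norm_num
    have hmin0 : min u (u-u) = 0 := by
      rw [sub_self]
      exact min_eq_right (by linarith)
    rw [hR0, hmin0]
    norm_num
    exact Cb_nonneg hε₀ hc
  rcases lt_or_ge u (L-ε₀) with h2 | hcase2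
  · -- middle region
    have hrc : c ≤ ‖f s - f (s+u)‖ := by
      rw [norm_sub_rev]; exact hcmin s hs u ⟨h1.le, h2.le⟩
    have hR : c^2 ≤ Rf f s u := by
      rw [Rf]; exact pow_le_pow_left₀ hc.le hrc 2
    have hRpos : 0 < Rf f s u := lt_of_lt_of_le (by positivity) hR
    have hmin : ε₀ ≤ min u (L-u) := le_min h1.le (by linarith)
    have hminpos : (0:ℝ) < min u (L-u) := lt_of_lt_of_le hε₀ hmin
    have hmin2 : ε₀^2 ≤ (min u (L-u))^2 := pow_le_pow_left₀ hε₀.le hmin 2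
    have hinvR : 1/Rf f s u ≤ 1/c^2 := one_div_le_one_div_of_le (by positivity) hR
    have hinvm : 1/(min u (L-u))^2 ≤ 1/ε₀^2 := one_div_le_one_div_of_le (by positivity) hmin2
    have hinvR0 : 0 < 1/Rf f s u := by positivity
    have hinvm0 : 0 < 1/(min u (L-u))^2 := by positivity
    have hM2 : (0:ℝ) ≤ M^2 := sq_nonneg M
    have hc20 : (0:ℝ) ≤ 1/c^2 := by positivity
    have he20 : (0:ℝ) ≤ 1/ε₀^2 := by positivity
    constructor
    · have : |1/Rf f s u - 1/(min u (L-u))^2| ≤ 1/c^2 + 1/ε₀^2 := by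
        rw [abs_sub_le_iff]
        constructor <;> linarith
      calc |1/Rf f s u - 1/(min u (L-u))^2| ≤ 1/c^2 + 1/ε₀^2 := this
        _ ≤ Cb M ε₀ c := by rw [Cb]; ring_nf; nlinarith
    · obtain ⟨hN1, hN2, hT⟩ := inner_abs_le hτ s u
      have hKb : |Kf f s u| ≤ 3 := by
        rw [Kf]
        have hprod : |2*N1f f s u*N2f f s u| ≤ 2*Rf f s u := by
          rw [abs_mul, abs_mul, abs_two, Rf]
          nlinarith [abs_nonneg (N1f f s u), abs_nonneg (N2f f s u),
            norm_nonneg (f s - f (s+u))]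
        have hdivb : |2*N1f f s u*N2f f s u/Rf f s u| ≤ 2 := by
          rw [abs_div, abs_of_pos hRpos, div_le_iff₀ hRpos]
          linarith
        calc |2*N1f f s u*N2f f s u/Rf f s u - Tf f s u|
            ≤ |2*N1f f s u*N2f f s u/Rf f s u| + |Tf f s u| := abs_sub _ _
          _ ≤ 3 := by linarith
      have h1K : |1 - Kf f s u| ≤ 4 := by
        calc |1 - Kf f s u| ≤ |(1:ℝ)| + |Kf f s u| := abs_sub _ _
          _ ≤ 4 := by rw [abs_one]; linarith
      calc |(1 - Kf f s u)/Rf f s u| = |1 - Kf f s u|/Rf f s u := by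
            rw [abs_div, abs_of_pos hRpos]
        _ ≤ 4/Rf f s u := by gcongr
        _ ≤ 4/c^2 := by
            apply div_le_div_of_nonneg_left (by norm_num) (by positivity) hR
        _ ≤ Cb M ε₀ c := by rw [Cb]; ring_nf; nlinarith
  · -- near L : reflection
    obtain ⟨hRr, -, -, -, hKr⟩ := reflect hper hperτ s u
    have hmin : min u (L-u) = L-u := min_eq_right (by linarith)
    rw [hmin, hRr, hKr]
    exact hCbranch (L-u) (by linarith) (by linarith) (s+u-L)

/-! ### Two-variable integrands -/

def C2v (f : ℝ → EuclideanSpace ℝ (Fin n)) (s₁ s₂ : ℝ) : ℝ :=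
  (1 - (2 * ⟪f s₁ - f s₂, deriv f s₁⟫ * ⟪f s₁ - f s₂, deriv f s₂⟫
              / ‖f s₁ - f s₂‖ ^ 2
            - ⟪deriv f s₁, deriv f s₂⟫))
        / ‖f s₁ - f s₂‖ ^ 2

def E2v (L : ℝ) (f : ℝ → EuclideanSpace ℝ (Fin n)) (s₁ s₂ : ℝ) : ℝ :=
  1 / ‖f s₁ - f s₂‖ ^ 2 - 1 / (D L (s₁ - s₂)) ^ 2

def W2v (L : ℝ) (f : ℝ → EuclideanSpace ℝ (Fin n)) (s₁ s₂ : ℝ) : ℝ :=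
  1 / (D L (s₁ - s₂)) ^ 2 -
    (2 * ⟪f s₁ - f s₂, deriv f s₁⟫ * ⟪f s₁ - f s₂, deriv f s₂⟫ / ‖f s₁ - f s₂‖ ^ 2
      - ⟪deriv f s₁, deriv f s₂⟫) / ‖f s₁ - f s₂‖ ^ 2

lemma C2v_split (L : ℝ) (f : ℝ → EuclideanSpace ℝ (Fin n)) (s₁ s₂ : ℝ) :
    C2v f s₁ s₂ = E2v L f s₁ s₂ + W2v L f s₁ s₂ := by
  rw [C2v, E2v, W2v, sub_div]
  ring

lemma E2v_per (hper : ∀ s : ℝ, f (s + L) = f s) (s₁ s₂ : ℝ) :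
    E2v L f s₁ (s₂ + L) = E2v L f s₁ s₂ := by
  rw [E2v, E2v, hper s₂, show s₁ - (s₂ + L) = (s₁ - s₂) - L by ring, D_sub]

lemma W2v_per (hper : ∀ s : ℝ, f (s + L) = f s)
    (hperτ : ∀ s : ℝ, deriv f (s + L) = deriv f s) (s₁ s₂ : ℝ) :
    W2v L f s₁ (s₂ + L) = W2v L f s₁ s₂ := by
  rw [W2v, W2v, hper s₂, hperτ s₂, show s₁ - (s₂ + L) = (s₁ - s₂) - L by ring, D_sub]

lemma E2v_shift (hL : 0 < L) (s u : ℝ) (hu : u ∈ Set.Icc 0 L) :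
    E2v L f s (s + u) = 1 / Rf f s u - 1 / (min u (L - u))^2 := by
  rw [E2v, show s - (s + u) = -u by ring, D_eval hL hu, Rf]

lemma W2v_shift (hL : 0 < L) (s u : ℝ) (hu : u ∈ Set.Icc 0 L) :
    W2v L f s (s + u) = gf L f s u := by
  rw [W2v, show s - (s + u) = -u by ring, D_eval hL hu, gf, Kf, N1f, N2f, Tf, Rf]

lemma gf_bound (hL : 0 < L) (hdf : Differentiable ℝ f) (hdc : Continuous (deriv f))
    (hτ : ∀ s, ‖deriv f s‖ = 1) (hM0 : 0 ≤ M)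
    (hlip : ∀ x y, ‖deriv f x - deriv f y‖ ≤ M * |x - y|)
    (hper : ∀ s : ℝ, f (s + L) = f s) (hperτ : ∀ s : ℝ, deriv f (s + L) = deriv f s)
    (hε₀ : 0 < ε₀) (hε₀L : ε₀ ≤ L/4) (hε₀M : M*ε₀ ≤ 1)
    (hc : 0 < c) (hcmin : ∀ s ∈ Set.Icc 0 L, ∀ u ∈ Set.Icc ε₀ (L-ε₀), c ≤ ‖f (s+u) - f s‖)
    (s : ℝ) (hs : s ∈ Set.Icc 0 L) (u : ℝ) (hu : u ∈ Set.Ioc 0 L) :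
    |gf L f s u| ≤ 2 * Cb M ε₀ c := by
  obtain ⟨hb1, hb2⟩ := g_bound hL hdf hdc hτ hM0 hlip hper hperτ hε₀ hε₀L hε₀M hc hcmin s hs u hu
  have hgid : gf L f s u = (1 - Kf f s u)/Rf f s u - (1/Rf f s u - 1/(min u (L-u))^2) := by
    rw [gf, sub_div]; ring
  rw [hgid]
  calc |(1 - Kf f s u)/Rf f s u - (1/Rf f s u - 1/(min u (L-u))^2)|
      ≤ |(1 - Kf f s u)/Rf f s u| + |1/Rf f s u - 1/(min u (L-u))^2| := abs_sub _ _
    _ ≤ 2 * Cb M ε₀ c := by linarith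

lemma E2v_bound (hL : 0 < L) (hdf : Differentiable ℝ f) (hdc : Continuous (deriv f))
    (hτ : ∀ s, ‖deriv f s‖ = 1) (hM0 : 0 ≤ M)
    (hlip : ∀ x y, ‖deriv f x - deriv f y‖ ≤ M * |x - y|)
    (hper : ∀ s : ℝ, f (s + L) = f s) (hperτ : ∀ s : ℝ, deriv f (s + L) = deriv f s)
    (hε₀ : 0 < ε₀) (hε₀L : ε₀ ≤ L/4) (hε₀M : M*ε₀ ≤ 1)
    (hc : 0 < c) (hcmin : ∀ s ∈ Set.Icc 0 L, ∀ u ∈ Set.Icc ε₀ (L-ε₀), c ≤ ‖f (s+u) - f s‖)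
    (s : ℝ) (hs : s ∈ Set.Icc 0 L) (s₂ : ℝ) (hs₂ : s₂ ∈ Set.Ioc 0 L) :
    |E2v L f s s₂| ≤ 2 * Cb M ε₀ c ∧ |W2v L f s s₂| ≤ 2 * Cb M ε₀ c := by
  have hCb := Cb_nonneg (M := M) hε₀ hc
  rcases lt_trichotomy s s₂ with hlt | heq | hgt
  · -- s₂ = s + u with u ∈ (0, L]
    set u := s₂ - s with hu_def
    have hu : u ∈ Set.Ioc 0 L := ⟨by simp [hu_def]; linarith,
      by simp only [hu_def]; linarith [hs.1, hs₂.2]⟩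
    have hs₂u : s₂ = s + u := by rw [hu_def]; ring
    rw [hs₂u]
    constructor
    · rw [E2v_shift hL s u ⟨hu.1.le, hu.2⟩]
      have := (g_bound hL hdf hdc hτ hM0 hlip hper hperτ hε₀ hε₀L hε₀M hc hcmin s hs u hu).1
      linarith
    · rw [W2v_shift hL s u ⟨hu.1.le, hu.2⟩]
      exact gf_bound hL hdf hdc hτ hM0 hlip hper hperτ hε₀ hε₀L hε₀M hc hcmin s hs u hu
  · -- s₂ = s
    subst heq
    have hE : E2v L f s s = 0 := by
      rw [E2v, sub_self, sub_self, norm_zero, D_zero hL]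
      norm_num
    have hW : W2v L f s s = 0 := by
      rw [W2v, sub_self, sub_self, norm_zero, D_zero hL]
      norm_num
    rw [hE, hW]
    simp only [abs_zero]
    constructor <;> linarith
  · -- s₂ < s : shift by a period
    set u := s₂ - s + L with hu_def
    have hu : u ∈ Set.Ioc 0 L := ⟨by simp only [hu_def]; linarith [hs₂.1, hs.2],
      by simp only [hu_def]; linarith⟩
    have hs₂u : s + u = s₂ + L := by rw [hu_def]; ring
    have hE : E2v L f s s₂ = E2v L f s (s + u) := by
      rw [hs₂u, E2v_per hper]
    have hW : W2v L f s s₂ = W2v L f s (s + u) := by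
      rw [hs₂u, W2v_per hper hperτ]
    rw [hE, hW]
    constructor
    · rw [E2v_shift hL s u ⟨hu.1.le, hu.2⟩]
      have := (g_bound hL hdf hdc hτ hM0 hlip hper hperτ hε₀ hε₀L hε₀M hc hcmin s hs u hu).1
      linarith
    · rw [W2v_shift hL s u ⟨hu.1.le, hu.2⟩]
      exact gf_bound hL hdf hdc hτ hM0 hlip hper hperτ hε₀ hε₀L hε₀M hc hcmin s hs u hu

/-! ### Measurability and integrability -/

lemma meas_gf (hdf : Differentiable ℝ f) (hdc : Continuous (deriv f)) (s : ℝ) :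
    Measurable (gf L f s) := by
  have hfc : Continuous f := hdf.continuous
  have hcurve : Continuous fun u : ℝ => f s - f (s+u) :=
    continuous_const.sub (hfc.comp (continuous_const.add continuous_id))
  have hRc : Continuous fun u => Rf f s u := (hcurve.norm).pow 2
  have hτc : Continuous fun u : ℝ => deriv f (s+u) :=
    hdc.comp (continuous_const.add continuous_id)
  have hN1c : Continuous fun u => N1f f s u := hcurve.inner continuous_const
  have hN2c : Continuous fun u => N2f f s u := hcurve.inner hτc
  have hTc : Continuous fun u => Tf f s u := continuous_const.inner hτc
  have hminc : Continuous fun u : ℝ => min u (L - u) :=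
    continuous_id.min (continuous_const.sub continuous_id)
  have hKm : Measurable fun u => Kf f s u :=
    ((((continuous_const.mul hN1c).mul hN2c).measurable).div hRc.measurable).sub hTc.measurable
  exact (measurable_const.div ((hminc.pow 2).measurable)).sub (hKm.div hRc.measurable)

lemma meas_E2W2 (hdf : Differentiable ℝ f) (hdc : Continuous (deriv f)) (s : ℝ) :
    Measurable (E2v L f s) ∧ Measurable (W2v L f s) := by
  have hfc : Continuous f := hdf.continuous
  have hcurve : Continuous fun s₂ : ℝ => f s - f s₂ := continuous_const.sub hfc
  have hRc : Continuous fun s₂ : ℝ => ‖f s - f s₂‖^2 := (hcurve.norm).pow 2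
  have hDc : Continuous fun s₂ : ℝ => (D L (s - s₂))^2 :=
    ((D_continuous L).comp (continuous_const.sub continuous_id)).pow 2
  have hN1c : Continuous fun s₂ : ℝ => ⟪f s - f s₂, deriv f s⟫ := hcurve.inner continuous_const
  have hN2c : Continuous fun s₂ : ℝ => ⟪f s - f s₂, deriv f s₂⟫ := hcurve.inner hdc
  have hTc : Continuous fun s₂ : ℝ => ⟪deriv f s, deriv f s₂⟫ := continuous_const.inner hdc
  have hKm : Measurable fun s₂ =>
      2 * ⟪f s - f s₂, deriv f s⟫ * ⟪f s - f s₂, deriv f s₂⟫ / ‖f s - f s₂‖^2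
        - ⟪deriv f s, deriv f s₂⟫ :=
    ((((continuous_const.mul hN1c).mul hN2c).measurable).div hRc.measurable).sub hTc.measurable
  constructor
  · exact (measurable_const.div hRc.measurable).sub (measurable_const.div hDc.measurable)
  · exact (measurable_const.div hDc.measurable).sub (hKm.div hRc.measurable)

lemma intInt_of_bound {φ : ℝ → ℝ} {C : ℝ} (hL : 0 < L) (hm : Measurable φ)
    (hb : ∀ x ∈ Set.Ioc 0 L, |φ x| ≤ C) : IntervalIntegrable φ volume 0 L := by
  rw [intervalIntegrable_iff_integrableOn_Ioc_of_le hL.le]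
  apply Integrable.mono' (g := fun _ => C)
  · exact integrableOn_const measure_Ioc_lt_top.ne
  · exact hm.aestronglyMeasurable
  · exact (ae_restrict_iff' measurableSet_Ioc).mpr (ae_of_all _ fun x hx => by
      rw [Real.norm_eq_abs]; exact hb x hx)

/-! ### The inner integral of `gf` -/

lemma gf_integral (hL : 0 < L) (hdf : Differentiable ℝ f) (hdc : Continuous (deriv f))
    (hτ : ∀ s, ‖deriv f s‖ = 1) (hM0 : 0 ≤ M)
    (hlip : ∀ x y, ‖deriv f x - deriv f y‖ ≤ M * |x - y|)
    (hper : ∀ s : ℝ, f (s + L) = f s) (hperτ : ∀ s : ℝ, deriv f (s + L) = deriv f s)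
    (hinj : ∀ s₁ s₂ : ℝ, f s₁ = f s₂ → ∃ k : ℤ, s₁ - s₂ = k * L)
    (hε₀ : 0 < ε₀) (hε₀L : ε₀ ≤ L/4) (hε₀M : M*ε₀ ≤ 1)
    (hc : 0 < c) (hcmin : ∀ s ∈ Set.Icc 0 L, ∀ u ∈ Set.Icc ε₀ (L-ε₀), c ≤ ‖f (s+u) - f s‖)
    (s : ℝ) (hs : s ∈ Set.Icc 0 L) :
    ∫ u in (0:ℝ)..L, gf L f s u = -(4/L) := by
  have hint_g : IntervalIntegrable (gf L f s) volume 0 L :=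
    intInt_of_bound hL (meas_gf hdf hdc s)
      (fun u hu => gf_bound hL hdf hdc hτ hM0 hlip hper hperτ hε₀ hε₀L hε₀M hc hcmin s hs u hu)
  set q : ℝ → ℝ := fun ε => ∫ u in ε..(L-ε), gf L f s u with hq_def
  have hIoo : ∀ u ∈ Set.Ioo (0:ℝ) L, HasDerivAt (fun v => Gf f s v) (Kf f s u / Rf f s u) u :=
    fun u hu => hasDerivAt_G hdf s u (r_pos hL hinj s u hu.1 hu.2)
  have hRne : ∀ u ∈ Set.Ioo (0:ℝ) L, Rf f s u ≠ 0 := fun u hu =>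
    pow_ne_zero 2 (norm_ne_zero_iff.mpr (sub_ne_zero.mpr (Ne.symm (r_pos hL hinj s u hu.1 hu.2))))
  -- continuity of K/R on (0, L)
  have hfc : Continuous f := hdf.continuous
  have hcurve : Continuous fun u : ℝ => f s - f (s+u) :=
    continuous_const.sub (hfc.comp (continuous_const.add continuous_id))
  have hRc : Continuous fun u => Rf f s u := (hcurve.norm).pow 2
  have hτc : Continuous fun u : ℝ => deriv f (s+u) := hdc.comp (continuous_const.add continuous_id)
  have hN1c : Continuous fun u => N1f f s u := hcurve.inner continuous_const
  have hN2c : Continuous fun u => N2f f s u := hcurve.inner hτc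
  have hTc : Continuous fun u => Tf f s u := continuous_const.inner hτc
  have hKRc : ContinuousOn (fun u => Kf f s u / Rf f s u) (Set.Ioo 0 L) := by
    apply ContinuousOn.div _ hRc.continuousOn hRne
    exact ((((continuous_const.mul hN1c).mul hN2c).continuousOn.div
      hRc.continuousOn hRne).sub hTc.continuousOn)
  -- Step C : explicit formula for q ε
  have hsplit : ∀ ε ∈ Set.Ioo (0:ℝ) ε₀,
      q ε = -(4/L) + (2/ε + Gf f s ε - Gf f s (L-ε)) := by
    rintro ε ⟨hε, hεε₀⟩
    have hεL4 : ε < L/4 := lt_of_lt_of_le hεε₀ hε₀L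
    have hsub1 : Set.uIcc ε (L/2) ⊆ Set.Ioo 0 L := by
      rw [Set.uIcc_of_le (by linarith)]
      exact Set.Icc_subset_Ioo hε (by linarith)
    have hsub2 : Set.uIcc (L/2) (L-ε) ⊆ Set.Ioo 0 L := by
      rw [Set.uIcc_of_le (by linarith)]
      exact Set.Icc_subset_Ioo (by linarith) (by linarith)
    have huIcc0L : ∀ x y : ℝ, 0 ≤ x → x ≤ L → 0 ≤ y → y ≤ L →
        Set.uIcc x y ⊆ Set.uIcc (0:ℝ) L := by
      intro x y h1 h2 h3 h4
      rw [Set.uIcc_of_le hL.le]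
      exact Set.uIcc_subset_Icc ⟨h1, h2⟩ ⟨h3, h4⟩
    -- first half
    have hv₁c : ContinuousOn (fun u => 1/u^2 - Kf f s u/Rf f s u) (Set.uIcc ε (L/2)) := by
      apply ContinuousOn.sub _ (hKRc.mono hsub1)
      apply ContinuousOn.div continuousOn_const ((continuous_id.pow 2).continuousOn)
      intro u hu
      exact pow_ne_zero 2 (ne_of_gt (hsub1 hu).1)
    have hftc1 : ∫ u in ε..(L/2), (1/u^2 - Kf f s u/Rf f s u)
        = (-(L/2)⁻¹ - Gf f s (L/2)) - (-ε⁻¹ - Gf f s ε) := by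
      have := intervalIntegral.integral_eq_sub_of_hasDerivAt
        (f := fun v => -(v⁻¹) - Gf f s v)
        (f' := fun u => 1/u^2 - Kf f s u/Rf f s u) (a := ε) (b := L/2)
        (fun u hu => by
          have hu' := hsub1 hu
          have h1 : HasDerivAt (fun v : ℝ => -(v⁻¹)) (1/u^2) u := by
            have := (hasDerivAt_inv (ne_of_gt hu'.1)).neg
            rw [show (1:ℝ)/u^2 = - -(u^2)⁻¹ by ring]; exact this
          exact h1.sub (hIoo u hu'))
        (hv₁c.intervalIntegrable)
      rw [this]
    have hcongr1 : ∫ u in ε..(L/2), gf L f s u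
        = ∫ u in ε..(L/2), (1/u^2 - Kf f s u/Rf f s u) := by
      apply intervalIntegral.integral_congr
      intro u hu
      have hu' := hsub1 hu
      rw [Set.uIcc_of_le (by linarith)] at hu
      rw [gf, min_eq_left (by linarith [hu.2] : u ≤ L - u)]
    -- second half
    have hv₂c : ContinuousOn (fun u => 1/(L-u)^2 - Kf f s u/Rf f s u)
        (Set.uIcc (L/2) (L-ε)) := by
      apply ContinuousOn.sub _ (hKRc.mono hsub2)
      apply ContinuousOn.div continuousOn_const
      · exact ((continuous_const.sub continuous_id).pow 2).continuousOn
      · intro u hu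
        exact pow_ne_zero 2 (sub_ne_zero.mpr (ne_of_gt (hsub2 hu).2))
    have hftc2 : ∫ u in (L/2)..(L-ε), (1/(L-u)^2 - Kf f s u/Rf f s u)
        = ((L-(L-ε))⁻¹ - Gf f s (L-ε)) - ((L-L/2)⁻¹ - Gf f s (L/2)) := by
      have := intervalIntegral.integral_eq_sub_of_hasDerivAt
        (f := fun v => (L-v)⁻¹ - Gf f s v)
        (f' := fun u => 1/(L-u)^2 - Kf f s u/Rf f s u) (a := L/2) (b := L-ε)
        (fun u hu => by
          have hu' := hsub2 hu
          have hne : L - u ≠ 0 := sub_ne_zero.mpr (ne_of_gt hu'.2)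
          have h1 : HasDerivAt (fun v : ℝ => (L-v)⁻¹) (1/(L-u)^2) u := by
            have hi := hasDerivAt_inv hne
            have hs' : HasDerivAt (fun v : ℝ => L - v) (-1) u := (hasDerivAt_id u).const_sub L
            have hcomp := hi.comp u hs'
            rw [show (1:ℝ)/(L-u)^2 = -((L-u)^2)⁻¹ * -1 by ring]; exact hcomp
          exact h1.sub (hIoo u hu'))
        (hv₂c.intervalIntegrable)
      rw [this]
    have hcongr2 : ∫ u in (L/2)..(L-ε), gf L f s u
        = ∫ u in (L/2)..(L-ε), (1/(L-u)^2 - Kf f s u/Rf f s u) := by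
      apply intervalIntegral.integral_congr
      intro u hu
      rw [Set.uIcc_of_le (by linarith)] at hu
      rw [gf, min_eq_right (by linarith [hu.1] : L - u ≤ u)]
    have hadd : (∫ u in ε..(L/2), gf L f s u) + (∫ u in (L/2)..(L-ε), gf L f s u)
        = q ε := by
      rw [hq_def]
      exact intervalIntegral.integral_add_adjacent_intervals
        (hint_g.mono_set (huIcc0L ε (L/2) hε.le (by linarith) (by linarith) (by linarith)))
        (hint_g.mono_set (huIcc0L (L/2) (L-ε) (by linarith) (by linarith) (by linarith)
          (by linarith)))
    rw [← hadd, hcongr1, hcongr2, hftc1, hftc2]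
    rw [show L - (L-ε) = ε by ring, show L - L/2 = L/2 by ring]
    have hL0 : L ≠ 0 := ne_of_gt hL
    have hε0 : ε ≠ 0 := ne_of_gt hε
    field_simp
    ring
  -- Step D1 : q tends to the full integral
  have hq_to_I : Filter.Tendsto q (nhdsWithin 0 (Set.Ioi 0))
      (nhds (∫ u in (0:ℝ)..L, gf L f s u)) := by
    have hdiff_bound : ∀ ε ∈ Set.Ioo (0:ℝ) ε₀,
        |(∫ u in (0:ℝ)..L, gf L f s u) - q ε| ≤ 4*Cb M ε₀ c * ε := by
      rintro ε ⟨hε, hεε₀⟩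
      have hεL4 : ε < L/4 := lt_of_lt_of_le hεε₀ hε₀L
      have huIcc0L : ∀ x y : ℝ, 0 ≤ x → x ≤ L → 0 ≤ y → y ≤ L →
          Set.uIcc x y ⊆ Set.uIcc (0:ℝ) L := by
        intro x y h1 h2 h3 h4
        rw [Set.uIcc_of_le hL.le]
        exact Set.uIcc_subset_Icc ⟨h1, h2⟩ ⟨h3, h4⟩
      have i1 : IntervalIntegrable (gf L f s) volume 0 ε :=
        hint_g.mono_set (huIcc0L 0 ε le_rfl hL.le hε.le (by linarith))
      have i2 : IntervalIntegrable (gf L f s) volume ε (L-ε) :=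
        hint_g.mono_set (huIcc0L ε (L-ε) hε.le (by linarith) (by linarith) (by linarith))
      have i3 : IntervalIntegrable (gf L f s) volume (L-ε) L :=
        hint_g.mono_set (huIcc0L (L-ε) L (by linarith) (by linarith) hL.le le_rfl)
      have hsum1 : (∫ u in (0:ℝ)..ε, gf L f s u) + (∫ u in ε..(L-ε), gf L f s u)
          = ∫ u in (0:ℝ)..(L-ε), gf L f s u :=
        intervalIntegral.integral_add_adjacent_intervals i1 i2
      have hsum2 : (∫ u in (0:ℝ)..(L-ε), gf L f s u) + (∫ u in (L-ε)..L, gf L f s u)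
          = ∫ u in (0:ℝ)..L, gf L f s u :=
        intervalIntegral.integral_add_adjacent_intervals (i1.trans i2) i3
      have hb1 : |∫ u in (0:ℝ)..ε, gf L f s u| ≤ 2*Cb M ε₀ c * ε := by
        have := intervalIntegral.norm_integral_le_of_norm_le_const
          (C := 2*Cb M ε₀ c) (f := gf L f s) (a := 0) (b := ε) (fun x hx => by
            rw [Set.uIoc_of_le hε.le] at hx
            rw [Real.norm_eq_abs]
            exact gf_bound hL hdf hdc hτ hM0 hlip hper hperτ hε₀ hε₀L hε₀M hc hcmin s hs x
              ⟨hx.1, le_trans hx.2 (by linarith)⟩)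
        rw [Real.norm_eq_abs, sub_zero, abs_of_pos hε] at this
        exact this
      have hb2 : |∫ u in (L-ε)..L, gf L f s u| ≤ 2*Cb M ε₀ c * ε := by
        have := intervalIntegral.norm_integral_le_of_norm_le_const
          (C := 2*Cb M ε₀ c) (f := gf L f s) (a := L-ε) (b := L) (fun x hx => by
            rw [Set.uIoc_of_le (by linarith)] at hx
            rw [Real.norm_eq_abs]
            exact gf_bound hL hdf hdc hτ hM0 hlip hper hperτ hε₀ hε₀L hε₀M hc hcmin s hs x
              ⟨by linarith [hx.1], hx.2⟩)
        rw [Real.norm_eq_abs, show L - (L-ε) = ε by ring, abs_of_pos hε] at this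
        exact this
      have hid : (∫ u in (0:ℝ)..L, gf L f s u) - q ε
          = (∫ u in (0:ℝ)..ε, gf L f s u) + (∫ u in (L-ε)..L, gf L f s u) := by
        rw [hq_def]
        linarith [hsum1, hsum2]
      rw [hid]
      calc |(∫ u in (0:ℝ)..ε, gf L f s u) + (∫ u in (L-ε)..L, gf L f s u)|
          ≤ |∫ u in (0:ℝ)..ε, gf L f s u| + |∫ u in (L-ε)..L, gf L f s u| := abs_add_le _ _
        _ ≤ 4*Cb M ε₀ c * ε := by linarith
    have htend0 : Filter.Tendsto (fun ε => (∫ u in (0:ℝ)..L, gf L f s u) - q ε)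
        (nhdsWithin 0 (Set.Ioi 0)) (nhds 0) := by
      apply squeeze_zero_norm' (a := fun ε => 4*Cb M ε₀ c * ε)
      · exact Filter.eventually_of_mem (Ioo_mem_nhdsGT hε₀)
          (fun ε hε => by rw [Real.norm_eq_abs]; exact hdiff_bound ε hε)
      · have : Filter.Tendsto (fun ε : ℝ => 4*Cb M ε₀ c * ε) (nhds 0)
            (nhds (4*Cb M ε₀ c * 0)) := (continuous_const.mul continuous_id).tendsto 0
        rw [mul_zero] at this
        exact this.mono_left nhdsWithin_le_nhds
    have := Filter.Tendsto.const_sub (∫ u in (0:ℝ)..L, gf L f s u) htend0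
    simp only [sub_zero, sub_sub_cancel] at this
    exact this
  -- Step D2 : q tends to -(4/L)
  have hq_to_val : Filter.Tendsto q (nhdsWithin 0 (Set.Ioi 0)) (nhds (-(4/L))) := by
    have hGlim1 : Filter.Tendsto (fun ε => Gf f s ε + 1/ε)
        (nhdsWithin 0 (Set.Ioi 0)) (nhds 0) := by
      apply squeeze_zero_norm' (a := fun ε => 6*M^2*ε)
      · apply Filter.eventually_of_mem (Ioo_mem_nhdsGT hε₀)
        rintro ε ⟨hε, hεε₀⟩
        have hMε : M*ε ≤ 1 := le_trans (mul_le_mul_of_nonneg_left hεε₀.le hM0) hε₀M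
        have := (curve_bounds' hdf hdc hτ hM0 hlip s ε hε hMε).2.2.1
        rw [Real.norm_eq_abs, Gf]
        exact this
      · have : Filter.Tendsto (fun ε : ℝ => 6*M^2*ε) (nhds 0) (nhds (6*M^2*0)) :=
          (continuous_const.mul continuous_id).tendsto 0
        rw [mul_zero] at this
        exact this.mono_left nhdsWithin_le_nhds
    have hGlim2 : Filter.Tendsto (fun ε => 1/ε - Gf f s (L-ε))
        (nhdsWithin 0 (Set.Ioi 0)) (nhds 0) := by
      apply squeeze_zero_norm' (a := fun ε => 6*M^2*ε)
      · apply Filter.eventually_of_mem (Ioo_mem_nhdsGT hε₀)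
        rintro ε ⟨hε, hεε₀⟩
        have hMε : M*ε ≤ 1 := le_trans (mul_le_mul_of_nonneg_left hεε₀.le hM0) hε₀M
        obtain ⟨hRr, hN1r, -, -, -⟩ := reflect hper hperτ s (L-ε)
        rw [show s + (L - ε) - L = s - ε from by ring, show L - (L-ε) = ε from by ring]
          at hRr hN1r
        have hGeq : Gf f s (L-ε) = -(N2f f (s-ε) ε / Rf f (s-ε) ε) := by
          rw [Gf, hRr, hN1r]; ring
        rw [Real.norm_eq_abs, hGeq]
        have hcb := (curve_bounds' hdf hdc hτ hM0 hlip (s-ε) ε hε hMε).2.2.2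
        rw [show 1/ε - -(N2f f (s-ε) ε / Rf f (s-ε) ε)
            = N2f f (s-ε) ε / Rf f (s-ε) ε + 1/ε from by ring]
        exact hcb
      · have : Filter.Tendsto (fun ε : ℝ => 6*M^2*ε) (nhds 0) (nhds (6*M^2*0)) :=
          (continuous_const.mul continuous_id).tendsto 0
        rw [mul_zero] at this
        exact this.mono_left nhdsWithin_le_nhds
    have hlim : Filter.Tendsto
        (fun ε => -(4/L) + ((Gf f s ε + 1/ε) + (1/ε - Gf f s (L-ε))))
        (nhdsWithin 0 (Set.Ioi 0)) (nhds (-(4/L))) := by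
      have h := Filter.Tendsto.const_add (-(4/L)) (hGlim1.add hGlim2)
      simpa using h
    apply Filter.Tendsto.congr' _ hlim
    apply Filter.eventuallyEq_of_mem (Ioo_mem_nhdsGT hε₀)
    intro ε hε
    rw [hsplit ε hε]
    ring
  exact tendsto_nhds_unique hq_to_I hq_to_val

/-! ### Inner integral identities -/

lemma W2v_integral (hL : 0 < L) (hdf : Differentiable ℝ f) (hdc : Continuous (deriv f))
    (hτ : ∀ s, ‖deriv f s‖ = 1) (hM0 : 0 ≤ M)
    (hlip : ∀ x y, ‖deriv f x - deriv f y‖ ≤ M * |x - y|)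
    (hper : ∀ s : ℝ, f (s + L) = f s) (hperτ : ∀ s : ℝ, deriv f (s + L) = deriv f s)
    (hinj : ∀ s₁ s₂ : ℝ, f s₁ = f s₂ → ∃ k : ℤ, s₁ - s₂ = k * L)
    (hε₀ : 0 < ε₀) (hε₀L : ε₀ ≤ L/4) (hε₀M : M*ε₀ ≤ 1)
    (hc : 0 < c) (hcmin : ∀ s ∈ Set.Icc 0 L, ∀ u ∈ Set.Icc ε₀ (L-ε₀), c ≤ ‖f (s+u) - f s‖)
    (s : ℝ) (hs : s ∈ Set.Icc 0 L) :
    ∫ s₂ in (0:ℝ)..L, W2v L f s s₂ = -(4/L) := by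
  have hWper : Function.Periodic (W2v L f s) L := fun x => W2v_per hper hperτ s x
  have h1 : ∫ s₂ in (0:ℝ)..L, W2v L f s s₂ = ∫ s₂ in s..(s+L), W2v L f s s₂ := by
    have := hWper.intervalIntegral_add_eq 0 s
    rwa [zero_add] at this
  have h2 : ∫ s₂ in s..(s+L), W2v L f s s₂ = ∫ u in (0:ℝ)..L, W2v L f s (s+u) := by
    have := intervalIntegral.integral_comp_add_left (a := (0:ℝ)) (b := L)
      (f := W2v L f s) s
    rw [add_zero] at this
    exact this.symm
  have h3 : ∫ u in (0:ℝ)..L, W2v L f s (s+u) = ∫ u in (0:ℝ)..L, gf L f s u :=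
    intervalIntegral.integral_congr (fun u hu => by
      rw [Set.uIcc_of_le hL.le] at hu
      exact W2v_shift hL s u hu)
  rw [h1, h2, h3]
  exact gf_integral hL hdf hdc hτ hM0 hlip hper hperτ hinj hε₀ hε₀L hε₀M hc hcmin s hs

lemma inner_identity (hL : 0 < L) (hdf : Differentiable ℝ f) (hdc : Continuous (deriv f))
    (hτ : ∀ s, ‖deriv f s‖ = 1) (hM0 : 0 ≤ M)
    (hlip : ∀ x y, ‖deriv f x - deriv f y‖ ≤ M * |x - y|)
    (hper : ∀ s : ℝ, f (s + L) = f s) (hperτ : ∀ s : ℝ, deriv f (s + L) = deriv f s)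
    (hinj : ∀ s₁ s₂ : ℝ, f s₁ = f s₂ → ∃ k : ℤ, s₁ - s₂ = k * L)
    (hε₀ : 0 < ε₀) (hε₀L : ε₀ ≤ L/4) (hε₀M : M*ε₀ ≤ 1)
    (hc : 0 < c) (hcmin : ∀ s ∈ Set.Icc 0 L, ∀ u ∈ Set.Icc ε₀ (L-ε₀), c ≤ ‖f (s+u) - f s‖)
    (s : ℝ) (hs : s ∈ Set.Icc 0 L) :
    ∫ s₂ in (0:ℝ)..L, C2v f s s₂ = (∫ s₂ in (0:ℝ)..L, E2v L f s s₂) - 4/L := by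
  have hE : IntervalIntegrable (E2v L f s) volume 0 L :=
    intInt_of_bound hL (meas_E2W2 hdf hdc s).1 (fun x hx =>
      (E2v_bound hL hdf hdc hτ hM0 hlip hper hperτ hε₀ hε₀L hε₀M hc hcmin s hs x hx).1)
  have hW : IntervalIntegrable (W2v L f s) volume 0 L :=
    intInt_of_bound hL (meas_E2W2 hdf hdc s).2 (fun x hx =>
      (E2v_bound hL hdf hdc hτ hM0 hlip hper hperτ hε₀ hε₀L hε₀M hc hcmin s hs x hx).2)
  calc ∫ s₂ in (0:ℝ)..L, C2v f s s₂
      = ∫ s₂ in (0:ℝ)..L, (E2v L f s s₂ + W2v L f s s₂) :=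
        intervalIntegral.integral_congr (fun x _ => C2v_split L f s x)
    _ = (∫ s₂ in (0:ℝ)..L, E2v L f s s₂) + ∫ s₂ in (0:ℝ)..L, W2v L f s s₂ :=
        intervalIntegral.integral_add hE hW
    _ = (∫ s₂ in (0:ℝ)..L, E2v L f s s₂) - 4/L := by
        rw [W2v_integral hL hdf hdc hτ hM0 hlip hper hperτ hinj hε₀ hε₀L hε₀M hc hcmin s hs]
        ring

lemma outer_integrable (hL : 0 < L) (hdf : Differentiable ℝ f) (hdc : Continuous (deriv f))
    (hτ : ∀ s, ‖deriv f s‖ = 1) (hM0 : 0 ≤ M)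
    (hlip : ∀ x y, ‖deriv f x - deriv f y‖ ≤ M * |x - y|)
    (hper : ∀ s : ℝ, f (s + L) = f s) (hperτ : ∀ s : ℝ, deriv f (s + L) = deriv f s)
    (hε₀ : 0 < ε₀) (hε₀L : ε₀ ≤ L/4) (hε₀M : M*ε₀ ≤ 1)
    (hc : 0 < c) (hcmin : ∀ s ∈ Set.Icc 0 L, ∀ u ∈ Set.Icc ε₀ (L-ε₀), c ≤ ‖f (s+u) - f s‖) :
    IntervalIntegrable (fun s => ∫ s₂ in (0:ℝ)..L, E2v L f s s₂) volume 0 L := by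
  have hfc : Continuous f := hdf.continuous
  have hcur : Continuous fun p : ℝ×ℝ => f p.1 - f p.2 :=
    (hfc.comp continuous_fst).sub (hfc.comp continuous_snd)
  have hR : Continuous fun p : ℝ×ℝ => ‖f p.1 - f p.2‖^2 := (hcur.norm).pow 2
  have hD : Continuous fun p : ℝ×ℝ => (D L (p.1 - p.2))^2 :=
    ((D_continuous L).comp (continuous_fst.sub continuous_snd)).pow 2
  have hmeas2 : Measurable (fun p : ℝ×ℝ => E2v L f p.1 p.2) :=
    (measurable_const.div hR.measurable).sub (measurable_const.div hD.measurable)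
  have hsm : MeasureTheory.StronglyMeasurable fun s => ∫ s₂ in Set.Ioc (0:ℝ) L,
      E2v L f s s₂ :=
    hmeas2.stronglyMeasurable.integral_prod_right'
  have hfun : (fun s => ∫ s₂ in (0:ℝ)..L, E2v L f s s₂)
      = fun s => ∫ s₂ in Set.Ioc (0:ℝ) L, E2v L f s s₂ :=
    funext fun s => intervalIntegral.integral_of_le hL.le
  apply intInt_of_bound hL
  · rw [hfun]; exact hsm.measurable
  · intro s hsIoc
    have hs : s ∈ Set.Icc 0 L := ⟨hsIoc.1.le, hsIoc.2⟩
    have := intervalIntegral.norm_integral_le_of_norm_le_const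
      (C := 2*Cb M ε₀ c) (f := E2v L f s) (a := 0) (b := L) (fun x hx => by
        rw [Set.uIoc_of_le hL.le] at hx
        rw [Real.norm_eq_abs]
        exact (E2v_bound hL hdf hdc hτ hM0 hlip hper hperτ hε₀ hε₀L hε₀M hc hcmin s hs x hx).1)
    rw [Real.norm_eq_abs, sub_zero, abs_of_pos hL] at this
    exact this

end CF

/-- **Cosine formula.** -/
theorem cosine_formula
    (n : ℕ) (hn : 2 ≤ n) (L : ℝ) (hL : 0 < L)
    (f : ℝ → EuclideanSpace ℝ (Fin n))
    (hper : ∀ s : ℝ, f (s + L) = f s)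
    (hC2 : ContDiff ℝ 2 f)
    (harc : ∀ s : ℝ, ‖deriv f s‖ = 1)
    (hinj : ∀ s₁ s₂ : ℝ, f s₁ = f s₂ → ∃ k : ℤ, s₁ - s₂ = k * L) :
    (∫ s₁ in (0:ℝ)..L, ∫ s₂ in (0:ℝ)..L,
      (1 - (2 * ⟪f s₁ - f s₂, deriv f s₁⟫ * ⟪f s₁ - f s₂, deriv f s₂⟫
              / ‖f s₁ - f s₂‖ ^ 2
            - ⟪deriv f s₁, deriv f s₂⟫))
        / ‖f s₁ - f s₂‖ ^ 2)
    = (∫ s₁ in (0:ℝ)..L, ∫ s₂ in (0:ℝ)..L,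
        (1 / ‖f s₁ - f s₂‖ ^ 2 - 1 / (⨅ k : ℤ, |s₁ - s₂ + (k : ℝ) * L|) ^ 2)) - 4 := by
  classical
  have h2eq : (2 : WithTop ℕ∞) = 1 + 1 := by norm_num
  have hC2' : ContDiff ℝ ((1:WithTop ℕ∞) + 1) f := by rw [← h2eq]; exact hC2
  have hdf : Differentiable ℝ f := (contDiff_succ_iff_deriv.mp hC2').1
  have hd1 : ContDiff ℝ 1 (deriv f) := (contDiff_succ_iff_deriv.mp hC2').2.2
  have hdc : Continuous (deriv f) := hd1.continuous
  obtain ⟨hτd, hAc⟩ := contDiff_one_iff_deriv.mp hd1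
  have hperτ : ∀ s : ℝ, deriv f (s + L) = deriv f s := by
    intro s
    have h1 : deriv (fun x => f (x + L)) s = deriv f (s + L) := deriv_comp_add_const f L s
    have h2 : (fun x => f (x + L)) = f := funext hper
    rw [h2] at h1
    exact h1.symm
  have hperA : ∀ s : ℝ, deriv (deriv f) (s + L) = deriv (deriv f) s := by
    intro s
    have h1 : deriv (fun x => deriv f (x + L)) s = deriv (deriv f) (s + L) :=
      deriv_comp_add_const (deriv f) L s
    have h2 : (fun x => deriv f (x + L)) = deriv f := funext hperτ
    rw [h2] at h1
    exact h1.symm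
  obtain ⟨M₀, hM₀⟩ :=
    (isCompact_Icc (a := (0:ℝ)) (b := L)).exists_bound_of_continuousOn hAc.continuousOn
  set M : ℝ := max M₀ 0 with hM_def
  have hM0 : 0 ≤ M := le_max_right _ _
  have hAb : ∀ t : ℝ, ‖deriv (deriv f) t‖ ≤ M := by
    intro t
    obtain ⟨y, hy, hty⟩ :=
      Function.Periodic.exists_mem_Ico₀ (f := deriv (deriv f)) hperA hL t
    rw [hty]
    exact le_trans (hM₀ y ⟨hy.1, hy.2.le⟩) (le_max_left _ _)
  have hlipW : LipschitzWith ⟨M, hM0⟩ (deriv f) :=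
    lipschitzWith_of_nnnorm_deriv_le hτd (fun x => by
      exact NNReal.coe_le_coe.mp (hAb x))
  have hlip : ∀ x y : ℝ, ‖deriv f x - deriv f y‖ ≤ M * |x - y| := by
    intro x y
    have := hlipW.dist_le_mul x y
    rw [dist_eq_norm, Real.dist_eq] at this; exact this
  set ε₀ : ℝ := min (L/4) (1/(M+1)) with hε₀_def
  have hε₀ : 0 < ε₀ := lt_min (by linarith) (by positivity)
  have hε₀L : ε₀ ≤ L/4 := min_le_left _ _
  have hε₀M : M * ε₀ ≤ 1 := by
    calc M * ε₀ ≤ M * (1/(M+1)) := mul_le_mul_of_nonneg_left (min_le_right _ _) hM0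
      _ ≤ 1 := by
          rw [mul_one_div]
          exact div_le_one_of_le₀ (by linarith) (by linarith)
  have hKc : IsCompact ((Set.Icc (0:ℝ) L) ×ˢ (Set.Icc ε₀ (L-ε₀))) :=
    isCompact_Icc.prod isCompact_Icc
  have hKne : ((Set.Icc (0:ℝ) L) ×ˢ (Set.Icc ε₀ (L-ε₀))).Nonempty :=
    ⟨(0, ε₀), ⟨⟨le_rfl, hL.le⟩, ⟨le_rfl, by linarith⟩⟩⟩
  have hgc : ContinuousOn (fun p : ℝ×ℝ => ‖f (p.1+p.2) - f p.1‖)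
      ((Set.Icc (0:ℝ) L) ×ˢ (Set.Icc ε₀ (L-ε₀))) :=
    (((hdf.continuous.comp (continuous_fst.add continuous_snd)).sub
      (hdf.continuous.comp continuous_fst)).norm).continuousOn
  obtain ⟨p₀, hp₀K, hp₀min⟩ := hKc.exists_isMinOn hKne hgc
  set c : ℝ := ‖f (p₀.1+p₀.2) - f p₀.1‖ with hc_def
  have hp₀2 : p₀.2 ∈ Set.Icc ε₀ (L-ε₀) := hp₀K.2
  have hc : 0 < c := by
    rw [hc_def, norm_pos_iff]
    apply sub_ne_zero.mpr
    exact CF.r_pos hL hinj p₀.1 p₀.2 (lt_of_lt_of_le hε₀ hp₀2.1)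
      (lt_of_le_of_lt hp₀2.2 (by linarith))
  have hcmin : ∀ s ∈ Set.Icc (0:ℝ) L, ∀ u ∈ Set.Icc ε₀ (L-ε₀), c ≤ ‖f (s+u) - f s‖ := by
    intro s hs u hu
    exact (isMinOn_iff.mp hp₀min) (s, u) (Set.mk_mem_prod hs hu)
  have hmain : (∫ s₁ in (0:ℝ)..L, ∫ s₂ in (0:ℝ)..L, CF.C2v f s₁ s₂)
      = (∫ s₁ in (0:ℝ)..L, ∫ s₂ in (0:ℝ)..L, CF.E2v L f s₁ s₂) - 4 := by
    have h1 : (∫ s₁ in (0:ℝ)..L, ∫ s₂ in (0:ℝ)..L, CF.C2v f s₁ s₂)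
        = ∫ s₁ in (0:ℝ)..L, ((∫ s₂ in (0:ℝ)..L, CF.E2v L f s₁ s₂) - 4/L) := by
      apply intervalIntegral.integral_congr
      intro s hsu
      rw [Set.uIcc_of_le hL.le] at hsu
      exact CF.inner_identity hL hdf hdc harc hM0 hlip hper hperτ hinj hε₀ hε₀L hε₀M
        hc hcmin s hsu
    rw [h1, intervalIntegral.integral_sub
      (CF.outer_integrable hL hdf hdc harc hM0 hlip hper hperτ hε₀ hε₀L hε₀M hc hcmin)
      intervalIntegrable_const, intervalIntegral.integral_const, sub_zero, smul_eq_mul]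
    have : L * (4/L) = 4 := by field_simp
    rw [this]
  simpa only [CF.C2v, CF.E2v, CF.D] using hmain

end
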